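/- Consider the exact DPP iteration with parameter η > 0 started from Ψ_0 with ‖Ψ_0‖ ≤ V_max. Assume additionally that the MDP has a unique deterministic optimal policy, i.e. for every state x the maximizer a*(x) = argmax_{a} Q*(x,a) is unique. Then for every state x: lim_{k→∞} Ψ_k(x, a*(x)) = V*(x), and for every action a ≠ a*(x), Ψ_k(x,a) → −∞ as k → ∞. -/

import Mathlib

open Finset Real Filter

variable {X A : Type*}

/-- `(πQ)(x) = Σ_a π(a|x) Q(x,a)`. -/
noncomputable def polApply [Fintype A] (pol : X → A → ℝ) (Q : X → A → ℝ) : X → ℝ :=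
  fun x => ∑ a, pol x a * Q x a

/-- Bellman operator `T^π`. -/
noncomputable def bellman [Fintype X] [Fintype A]
    (P : X → A → X → ℝ) (r : X → A → ℝ) (γ : ℝ) (pol : X → A → ℝ)
    (Q : X → A → ℝ) : X → A → ℝ :=
  fun x a => r x a + γ * ∑ x', ∑ a', P x a x' * pol x' a' * Q x' a'

/-- Bellman optimality operator `T`. -/
noncomputable def bellmanOpt [Fintype X] [Fintype A] [Nonempty A]
    (P : X → A → X → ℝ) (r : X → A → ℝ) (γ : ℝ) (Q : X → A → ℝ) : X → A → ℝ :=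
  fun x a => r x a + γ * ∑ x', P x a x' * (Finset.univ.sup' Finset.univ_nonempty (Q x'))

/-- Soft-max policy associated with action preferences `Ψ` at inverse temperature `η`. -/
noncomputable def softmaxPol [Fintype A] (η : ℝ) (Ψ : X → A → ℝ) : X → A → ℝ :=
  fun x a => Real.exp (η * Ψ x a) / ∑ a', Real.exp (η * Ψ x a')

/-- Supremum norm over state-action pairs. -/
noncomputable def supNorm [Fintype X] [Fintype A] [Nonempty X] [Nonempty A]
    (Q : X → A → ℝ) : ℝ :=
  Finset.univ.sup' Finset.univ_nonempty (fun p : X × A => |Q p.1 p.2|)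


section auxlemmas


lemma aux_texp (t : ℝ) : t * Real.exp (-t) ≤ Real.exp (-1) := by
  have h := Real.add_one_le_exp (t - 1)
  have h2 : Real.exp (t - 1) * Real.exp (-t) = Real.exp (-1) := by
    rw [← Real.exp_add]; ring_nf
  nlinarith [Real.exp_pos (-t), Real.exp_pos (-1)]

lemma aux_texp1 (η d : ℝ) (hη : 0 < η) : d * Real.exp (-(η * d)) ≤ Real.exp (-1) / η := by
  have h := aux_texp (η * d)
  rw [← sub_nonneg] at h
  rw [div_eq_inv_mul, ← sub_nonneg]
  calc (0:ℝ) ≤ η⁻¹ * (Real.exp (-1) - η * d * Real.exp (-(η * d))) := by positivity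
    _ = η⁻¹ * Real.exp (-1) - d * Real.exp (-(η * d)) := by field_simp

lemma aux_texp2 (η d t : ℝ) (hη : 0 < η) (ht : 0 ≤ t) (hdt : t ≤ d) :
    d * Real.exp (-(η * d)) ≤ 2 * Real.exp (-1) / η * Real.exp (-(η * t) / 2) := by
  have hd : 0 ≤ d := ht.trans hdt
  have h1 : d * Real.exp (-(η * d) / 2) ≤ 2 * Real.exp (-1) / η := by
    have := aux_texp1 (η / 2) d (by positivity)
    calc d * Real.exp (-(η * d) / 2) = d * Real.exp (-(η / 2 * d)) := by ring_nf
      _ ≤ Real.exp (-1) / (η / 2) := this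
      _ = 2 * Real.exp (-1) / η := by field_simp
  have h2 : Real.exp (-(η * d) / 2) ≤ Real.exp (-(η * t) / 2) := by
    apply Real.exp_le_exp.mpr
    nlinarith
  have h3 : Real.exp (-(η * d)) = Real.exp (-(η * d) / 2) * Real.exp (-(η * d) / 2) := by
    rw [← Real.exp_add]; ring_nf
  calc d * Real.exp (-(η * d))
      = (d * Real.exp (-(η * d) / 2)) * Real.exp (-(η * d) / 2) := by rw [h3]; ring
    _ ≤ (2 * Real.exp (-1) / η) * Real.exp (-(η * t) / 2) := by
        apply mul_le_mul h1 h2 (Real.exp_pos _).le (by positivity)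

lemma aux_contract (γ : ℝ) (hγ0 : 0 ≤ γ) (hγ1 : γ < 1) (w δ : ℕ → ℝ)
    (hw : ∀ k, 0 ≤ w k) (hδ : Tendsto δ atTop (nhds 0))
    (hrec : ∀ᶠ k in atTop, w (k+1) ≤ γ * w k + δ k) :
    Tendsto w atTop (nhds 0) := by
  rw [Metric.tendsto_atTop]
  intro ρ hρ
  have hδ' : ∀ᶠ k in atTop, δ k ≤ (1 - γ) * ρ / 4 := by
    obtain ⟨N, hN⟩ := Metric.tendsto_atTop.mp hδ ((1 - γ) * ρ / 4)
      (by have : (0:ℝ) < 1 - γ := by linarith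
          positivity)
    filter_upwards [eventually_ge_atTop N] with k hk
    have := (hN k hk).le
    rw [Real.dist_eq, sub_zero] at this
    have := abs_le.mp this
    linarith [this.2]
  obtain ⟨K, hK⟩ := (hrec.and hδ').exists_forall_of_atTop
  have key : ∀ n, w (K + n) ≤ γ ^ n * w K + ρ / 4 := by
    intro n
    induction n with
    | zero => simp; nlinarith [hw K]
    | succ n ih =>
      have h1 := (hK (K + n) (Nat.le_add_right _ _)).1
      have h2 := (hK (K + n) (Nat.le_add_right _ _)).2
      have : w (K + n + 1) ≤ γ * (γ ^ n * w K + ρ / 4) + (1 - γ) * ρ / 4 := by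
        calc w (K + n + 1) ≤ γ * w (K + n) + δ (K + n) := h1
          _ ≤ γ * (γ ^ n * w K + ρ / 4) + (1 - γ) * ρ / 4 := by
              have := mul_le_mul_of_nonneg_left ih hγ0
              linarith
      have heq : K + (n + 1) = K + n + 1 := by ring
      rw [heq]
      calc w (K + n + 1) ≤ γ * (γ ^ n * w K + ρ / 4) + (1 - γ) * ρ / 4 := this
        _ ≤ γ ^ (n+1) * w K + ρ / 4 := by ring_nf; nlinarith [hw K]
  have hpow : Tendsto (fun n => γ ^ n * w K) atTop (nhds 0) := by
    have := tendsto_pow_atTop_nhds_zero_of_lt_one hγ0 hγ1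
    simpa using this.mul_const (w K)
  obtain ⟨N, hN⟩ := (Metric.tendsto_atTop.mp hpow (ρ / 4) (by positivity))
  refine ⟨K + N, fun k hk => ?_⟩
  have hk' : ∃ n, k = K + n ∧ N ≤ n := ⟨k - K, by omega, by omega⟩
  obtain ⟨n, rfl, hn⟩ := hk'
  have h1 := key n
  have h2 := hN n hn
  rw [Real.dist_eq, sub_zero] at h2 ⊢
  rw [abs_of_nonneg (hw _)]
  have : γ ^ n * w K < ρ / 4 := by
    have := abs_le.mp h2.le
    have hnn : 0 ≤ γ ^ n * w K := mul_nonneg (pow_nonneg hγ0 _) (hw K)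
    calc γ ^ n * w K = |γ ^ n * w K| := (abs_of_nonneg hnn).symm
      _ < ρ / 4 := by rw [abs_of_nonneg hnn] at h2 ⊢; exact h2
  linarith


variable [Fintype A] [Nonempty A]




lemma softZ_pos (η : ℝ) (f : A → ℝ) : 0 < ∑ a', Real.exp (η * f a') :=
  Finset.sum_pos (fun a _ => Real.exp_pos _) univ_nonempty

lemma softmax_nonneg (η : ℝ) (f : A → ℝ) (a : A) :
    0 ≤ Real.exp (η * f a) / ∑ a', Real.exp (η * f a') :=
  div_nonneg (Real.exp_pos _).le (softZ_pos η f).le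

lemma softmax_sum_one (η : ℝ) (f : A → ℝ) :
    ∑ a, Real.exp (η * f a) / ∑ a', Real.exp (η * f a') = 1 := by
  rw [← Finset.sum_div, div_self (softZ_pos η f).ne']

lemma softmax_le_sup (η : ℝ) (f : A → ℝ) :
    ∑ a, (Real.exp (η * f a) / ∑ a', Real.exp (η * f a')) * f a
      ≤ univ.sup' univ_nonempty f := by
  calc ∑ a, (Real.exp (η * f a) / ∑ a', Real.exp (η * f a')) * f a
      ≤ ∑ a, (Real.exp (η * f a) / ∑ a', Real.exp (η * f a')) * univ.sup' univ_nonempty f :=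
        Finset.sum_le_sum (fun a _ => mul_le_mul_of_nonneg_left
          (Finset.le_sup' f (mem_univ a)) (softmax_nonneg η f a))
    _ = univ.sup' univ_nonempty f := by
        rw [← Finset.sum_mul, softmax_sum_one, one_mul]

lemma softmax_gap (η : ℝ) (hη : 0 < η) (f : A → ℝ) :
    univ.sup' univ_nonempty f
      - ∑ a, (Real.exp (η * f a) / ∑ a', Real.exp (η * f a')) * f a
    ≤ ∑ a, (univ.sup' univ_nonempty f - f a)
        * Real.exp (-(η * (univ.sup' univ_nonempty f - f a))) := by
  set m := univ.sup' univ_nonempty f with hm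
  have hsum : m - ∑ a, (Real.exp (η * f a) / ∑ a', Real.exp (η * f a')) * f a
      = ∑ a, (Real.exp (η * f a) / ∑ a', Real.exp (η * f a')) * (m - f a) := by
    have h1 : ∑ a, (Real.exp (η * f a) / ∑ a', Real.exp (η * f a')) * (m - f a)
        = (∑ a, (Real.exp (η * f a) / ∑ a', Real.exp (η * f a')) * m)
          - ∑ a, (Real.exp (η * f a) / ∑ a', Real.exp (η * f a')) * f a := by
      rw [← Finset.sum_sub_distrib]
      exact Finset.sum_congr rfl (fun a _ => by ring)
    rw [h1, ← Finset.sum_mul, softmax_sum_one, one_mul]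
  rw [hsum]
  apply Finset.sum_le_sum
  intro a _
  have hd : 0 ≤ m - f a := sub_nonneg.mpr (Finset.le_sup' f (mem_univ a))
  have hZ : Real.exp (η * m) ≤ ∑ a', Real.exp (η * f a') := by
    obtain ⟨a0, _, ha0⟩ := Finset.exists_mem_eq_sup' univ_nonempty f
    calc Real.exp (η * m) = Real.exp (η * f a0) := by rw [hm, ha0]
      _ ≤ ∑ a', Real.exp (η * f a') :=
          Finset.single_le_sum (f := fun a' => Real.exp (η * f a')) (fun a' _ => (Real.exp_pos _).le) (mem_univ a0)
  have hp : Real.exp (η * f a) / ∑ a', Real.exp (η * f a')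
      ≤ Real.exp (-(η * (m - f a))) := by
    have : Real.exp (η * f a) / ∑ a', Real.exp (η * f a')
        ≤ Real.exp (η * f a) / Real.exp (η * m) :=
      div_le_div_of_nonneg_left (Real.exp_pos _).le (Real.exp_pos _) hZ
    calc Real.exp (η * f a) / ∑ a', Real.exp (η * f a')
        ≤ Real.exp (η * f a) / Real.exp (η * m) := this
      _ = Real.exp (-(η * (m - f a))) := by
          rw [← Real.exp_sub]; ring_nf
  calc (Real.exp (η * f a) / ∑ a', Real.exp (η * f a')) * (m - f a)
      ≤ Real.exp (-(η * (m - f a))) * (m - f a) :=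
        mul_le_mul_of_nonneg_right hp hd
    _ = (m - f a) * Real.exp (-(η * (m - f a))) := by ring


lemma dpp_core {X A : Type*} [Fintype X] [Fintype A] [Nonempty X] [Nonempty A]
    (P : X → A → X → ℝ) (hP0 : ∀ x a x', 0 ≤ P x a x') (hP1 : ∀ x a, ∑ x', P x a x' = 1)
    (γ : ℝ) (hγ0 : 0 ≤ γ) (hγ1 : γ < 1) (η : ℝ) (hη : 0 < η)
    (Ψ : ℕ → X → A → ℝ) (Qstar : X → A → ℝ) (Vstar : X → ℝ) (astar : X → A)
    (Vk ev : ℕ → X → ℝ)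
    (hVk : ∀ k x, Vk k x
      = ∑ a, (Real.exp (η * Ψ k x a) / ∑ a', Real.exp (η * Ψ k x a')) * Ψ k x a)
    (hev0 : ∀ x, ev 0 x = 0)
    (hevS : ∀ k x, ev (k+1) x = ev k x + Vk k x - Vstar x)
    (hstepQ : ∀ k x a, Ψ (k+1) x a
      = Ψ k x a + Qstar x a + γ * (∑ x', P x a x' * (Vk k x' - Vstar x')) - Vk k x)
    (hQa : ∀ x, Qstar x (astar x) = Vstar x)
    (hQle : ∀ x a, Qstar x a ≤ Vstar x)
    (Δ : ℝ) (hΔpos : 0 < Δ) (hΔle : ∀ x a, a ≠ astar x → Δ ≤ Vstar x - Qstar x a)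
    (N0 : ℝ) (hN0 : ∀ x a, |Ψ 0 x a| ≤ N0)
    (M : ℝ) (hM : ∀ x, |Vstar x| ≤ M) :
    ∀ x : X,
      Tendsto (fun k => Ψ k x (astar x)) atTop (nhds (Vstar x)) ∧
      ∀ a : A, a ≠ astar x → Tendsto (fun k => Ψ k x a) atTop atBot := by
  classical
  obtain ⟨x0⟩ := ‹Nonempty X›
  obtain ⟨a0⟩ := ‹Nonempty A›
  have hN0nn : 0 ≤ N0 := le_trans (abs_nonneg _) (hN0 x0 a0)
  have hMnn : 0 ≤ M := le_trans (abs_nonneg _) (hM x0)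
  set c : ℝ := (Fintype.card A : ℝ) * (Real.exp (-1) / η) with hc
  have hcnn : 0 ≤ c := by rw [hc]; positivity
  set B : ℝ := N0 + M + c with hB
  have hBnn : 0 ≤ B := by rw [hB]; linarith
  set E : ℝ := B / (1 - γ) with hE
  have hEnn : 0 ≤ E := div_nonneg hBnn (by linarith)
  have h1γ : (1:ℝ) - γ ≠ 0 := by intro h; linarith [h]
  have hEeq : γ * E + B = E := by rw [hE]; field_simp; ring
  have hγE : γ * E ≤ E := by nlinarith
  -- weighted average bound
  have havg : ∀ (f : X → ℝ) (C : ℝ), (∀ x', |f x'| ≤ C) →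
      ∀ x a, |∑ x', P x a x' * f x'| ≤ C := by
    intro f C hC x a
    calc |∑ x', P x a x' * f x'| ≤ ∑ x', |P x a x' * f x'| := Finset.abs_sum_le_sum_abs _ _
      _ ≤ ∑ x', P x a x' * C := by
          apply Finset.sum_le_sum; intro x' _
          rw [abs_mul, abs_of_nonneg (hP0 x a x')]
          exact mul_le_mul_of_nonneg_left (hC x') (hP0 x a x')
      _ = C := by rw [← Finset.sum_mul, hP1, one_mul]
  -- the key identity (★)
  have hstar : ∀ k x a, Ψ k x a
      = Ψ 0 x a + (k:ℝ) * (Qstar x a - Vstar x)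
        + γ * (∑ x', P x a x' * ev k x') - ev k x := by
    intro k
    induction k with
    | zero => intro x a; simp [hev0]
    | succ k ih =>
      intro x a
      have h1 : ∑ x', P x a x' * ev (k+1) x'
          = (∑ x', P x a x' * ev k x') + (∑ x', P x a x' * (Vk k x' - Vstar x')) := by
        rw [← Finset.sum_add_distrib]
        refine Finset.sum_congr rfl fun x' _ => ?_
        rw [hevS k x']; ring
      rw [hstepQ k x a, ih x a, h1, hevS k x]
      push_cast
      ring
  -- boundedness of ev
  have hEbound : ∀ k x, |ev k x| ≤ E := by
    intro k
    induction k with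
    | zero => intro x; rw [hev0]; simpa using hEnn
    | succ k ih =>
      intro x
      have hPe : ∀ (x'' : X) (a : A), |∑ x', P x'' a x' * ev k x'| ≤ E := havg (ev k) E ih
      have hup : Vk k x ≤ N0 + γ * E - ev k x := by
        rw [hVk]
        refine le_trans (softmax_le_sup η (Ψ k x)) ?_
        apply Finset.sup'_le
        intro a _
        rw [hstar k x a]
        have h2 := abs_le.mp (hN0 x a)
        have h3 := abs_le.mp (hPe x a)
        have h4 : (k:ℝ) * (Qstar x a - Vstar x) ≤ 0 :=
          mul_nonpos_of_nonneg_of_nonpos (Nat.cast_nonneg k) (by linarith [hQle x a])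
        have h6 : γ * (∑ x', P x a x' * ev k x') ≤ γ * E :=
          mul_le_mul_of_nonneg_left h3.2 hγ0
        linarith [h2.2]
      have hlo : Ψ k x (astar x) - c ≤ Vk k x := by
        rw [hVk]
        have hg := softmax_gap η hη (Ψ k x)
        have hsum : ∑ a, (univ.sup' univ_nonempty (Ψ k x) - Ψ k x a)
            * Real.exp (-(η * (univ.sup' univ_nonempty (Ψ k x) - Ψ k x a))) ≤ c := by
          rw [hc]
          calc ∑ a, (univ.sup' univ_nonempty (Ψ k x) - Ψ k x a)
              * Real.exp (-(η * (univ.sup' univ_nonempty (Ψ k x) - Ψ k x a)))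
              ≤ ∑ _a : A, Real.exp (-1) / η :=
                Finset.sum_le_sum fun a _ => aux_texp1 η _ hη
            _ = (Fintype.card A : ℝ) * (Real.exp (-1) / η) := by
                rw [Finset.sum_const, card_univ, nsmul_eq_mul]
        have h5 : Ψ k x (astar x) ≤ univ.sup' univ_nonempty (Ψ k x) :=
          Finset.le_sup' _ (mem_univ _)
        linarith
      have hΨa : -N0 - γ * E - ev k x ≤ Ψ k x (astar x) := by
        rw [hstar k x (astar x), hQa x]
        simp only [sub_self, mul_zero]
        have h2 := abs_le.mp (hN0 x (astar x))
        have h3 := abs_le.mp (hPe x (astar x))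
        have h7 : γ * (-E) ≤ γ * (∑ x', P x (astar x) x' * ev k x') :=
          mul_le_mul_of_nonneg_left h3.1 hγ0
        rw [mul_neg] at h7
        linarith [h2.1]
      rw [hevS k x]
      have h6 := abs_le.mp (ih x)
      have h7 := abs_le.mp (hM x)
      rw [← hEeq]
      apply abs_le.mpr
      constructor
      · rw [hB]; nlinarith
      · rw [hB]; nlinarith
  -- eventual dominance of the optimal action
  set C₂ : ℝ := 2 * N0 + 2 * E with hC2
  have hord : ∀ k x a, a ≠ astar x →
      Ψ k x a + ((k:ℝ) * Δ - C₂) ≤ Ψ k x (astar x) := by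
    intro k x a ha
    have h1 := abs_le.mp (hN0 x a)
    have h2 := abs_le.mp (hN0 x (astar x))
    have h3 := abs_le.mp (havg (ev k) E (hEbound k) x a)
    have h4 := abs_le.mp (havg (ev k) E (hEbound k) x (astar x))
    have h5 : (k:ℝ) * Δ ≤ (k:ℝ) * (Vstar x - Qstar x a) :=
      mul_le_mul_of_nonneg_left (hΔle x a ha) (Nat.cast_nonneg k)
    have h5' : (k:ℝ) * (Qstar x a - Vstar x) = -((k:ℝ) * (Vstar x - Qstar x a)) := by ring
    rw [hstar k x a, hstar k x (astar x), hQa x]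
    simp only [sub_self, mul_zero]
    have h6 : γ * (∑ x', P x a x' * ev k x') ≤ γ * E :=
      mul_le_mul_of_nonneg_left h3.2 hγ0
    have h7 : γ * (-E) ≤ γ * (∑ x', P x (astar x) x' * ev k x') :=
      mul_le_mul_of_nonneg_left h4.1 hγ0
    rw [mul_neg] at h7
    rw [h5', hC2]
    linarith [h1.2, h2.1]
  have hmaxat : ∀ (k : ℕ) (x : X), C₂ ≤ (k:ℝ) * Δ → ∀ a, Ψ k x a ≤ Ψ k x (astar x) := by
    intro k x hk a
    by_cases ha : a = astar x
    · rw [ha]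
    · linarith [hord k x a ha]
  have hsupeq : ∀ (k : ℕ) (x : X), C₂ ≤ (k:ℝ) * Δ →
      univ.sup' univ_nonempty (Ψ k x) = Ψ k x (astar x) := fun k x hk =>
    le_antisymm (Finset.sup'_le _ _ fun a _ => hmaxat k x hk a)
      (Finset.le_sup' _ (mem_univ _))
  -- bound on the softmax gap at late times
  set cd : ℕ → ℝ := fun k => (Fintype.card A : ℝ)
      * (2 * Real.exp (-1) / η * Real.exp (-(η * ((k:ℝ) * Δ - C₂)) / 2)) with hcd
  have hcdnn : ∀ k, 0 ≤ cd k := by intro k; rw [hcd]; positivity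
  have hεub : ∀ (k : ℕ) (x : X), C₂ ≤ (k:ℝ) * Δ → Ψ k x (astar x) - Vk k x ≤ cd k := by
    intro k x hk
    have hg := softmax_gap η hη (Ψ k x)
    rw [hsupeq k x hk] at hg
    rw [hVk]
    refine le_trans hg ?_
    rw [hcd]
    calc ∑ a, (Ψ k x (astar x) - Ψ k x a)
          * Real.exp (-(η * (Ψ k x (astar x) - Ψ k x a)))
        ≤ ∑ _a : A, (2 * Real.exp (-1) / η * Real.exp (-(η * ((k:ℝ) * Δ - C₂)) / 2)) := by
          apply Finset.sum_le_sum
          intro a _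
          by_cases ha : a = astar x
          · rw [ha]
            simp only [sub_self, zero_mul]
            positivity
          · exact aux_texp2 η _ _ hη (by linarith) (by linarith [hord k x a ha])
      _ = (Fintype.card A : ℝ)
          * (2 * Real.exp (-1) / η * Real.exp (-(η * ((k:ℝ) * Δ - C₂)) / 2)) := by
          rw [Finset.sum_const, card_univ, nsmul_eq_mul]
  have hεlb : ∀ (k : ℕ) (x : X), C₂ ≤ (k:ℝ) * Δ → 0 ≤ Ψ k x (astar x) - Vk k x := by
    intro k x hk
    have h := softmax_le_sup η (Ψ k x)
    rw [hsupeq k x hk] at h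
    rw [hVk]; linarith
  -- the sup-distance to Vstar along the optimal action
  set w : ℕ → ℝ := fun k => univ.sup' univ_nonempty
      (fun x => |Ψ k x (astar x) - Vstar x|) with hwdef
  have hwb : ∀ (k : ℕ) (x : X), |Ψ k x (astar x) - Vstar x| ≤ w k := fun k x =>
    Finset.le_sup' (fun x => |Ψ k x (astar x) - Vstar x|) (mem_univ x)
  have hwnn : ∀ k, 0 ≤ w k := fun k =>
    le_trans (abs_nonneg _) (hwb k x0)
  have hrecw : ∀ (k : ℕ), C₂ ≤ (k:ℝ) * Δ → w (k+1) ≤ γ * w k + 2 * cd k := by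
    intro k hk
    show univ.sup' univ_nonempty (fun x => |Ψ (k+1) x (astar x) - Vstar x|)
      ≤ γ * w k + 2 * cd k
    apply Finset.sup'_le
    intro x _
    have hkey : Ψ (k+1) x (astar x) - Vstar x
        = γ * (∑ x', P x (astar x) x' * (Ψ k x' (astar x') - Vstar x'))
          + ((Ψ k x (astar x) - Vk k x)
            - γ * (∑ x', P x (astar x) x' * (Ψ k x' (astar x') - Vk k x'))) := by
      rw [hstepQ k x (astar x), hQa x]
      have hsplit : ∑ x', P x (astar x) x' * (Vk k x' - Vstar x')
          = (∑ x', P x (astar x) x' * (Ψ k x' (astar x') - Vstar x'))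
            - (∑ x', P x (astar x) x' * (Ψ k x' (astar x') - Vk k x')) := by
        rw [← Finset.sum_sub_distrib]
        exact Finset.sum_congr rfl fun x' _ => by ring
      rw [hsplit]; ring
    rw [hkey]
    have h1 : |∑ x', P x (astar x) x' * (Ψ k x' (astar x') - Vstar x')| ≤ w k :=
      havg _ _ (hwb k) x (astar x)
    have h2 : |∑ x', P x (astar x) x' * (Ψ k x' (astar x') - Vk k x')| ≤ cd k := by
      refine havg _ _ (fun x' => ?_) x (astar x)
      rw [abs_of_nonneg (hεlb k x' hk)]; exact hεub k x' hk
    have h3 : |Ψ k x (astar x) - Vk k x| ≤ cd k := by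
      rw [abs_of_nonneg (hεlb k x hk)]; exact hεub k x hk
    have h4 := abs_add_le (γ * (∑ x', P x (astar x) x' * (Ψ k x' (astar x') - Vstar x')))
      ((Ψ k x (astar x) - Vk k x)
        - γ * (∑ x', P x (astar x) x' * (Ψ k x' (astar x') - Vk k x')))
    have h5 := abs_sub (Ψ k x (astar x) - Vk k x)
      (γ * (∑ x', P x (astar x) x' * (Ψ k x' (astar x') - Vk k x')))
    rw [abs_mul, abs_of_nonneg hγ0] at h4 h5
    have h6 : γ * |∑ x', P x (astar x) x' * (Ψ k x' (astar x') - Vstar x')| ≤ γ * w k :=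
      mul_le_mul_of_nonneg_left h1 hγ0
    have h7 : γ * |∑ x', P x (astar x) x' * (Ψ k x' (astar x') - Vk k x')| ≤ γ * cd k :=
      mul_le_mul_of_nonneg_left h2 hγ0
    have h8 : γ * cd k ≤ cd k := by nlinarith [hcdnn k]
    linarith
  -- limit facts
  have hΔtend : Tendsto (fun k : ℕ => (k:ℝ) * Δ) atTop atTop :=
    Tendsto.atTop_mul_const hΔpos tendsto_natCast_atTop_atTop
  have hevent : ∀ᶠ k : ℕ in atTop, C₂ ≤ (k:ℝ) * Δ := hΔtend.eventually_ge_atTop C₂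
  have hexp : Tendsto (fun k : ℕ => Real.exp (-(η * ((k:ℝ) * Δ - C₂)) / 2)) atTop (nhds 0) := by
    apply Real.tendsto_exp_atBot.comp
    have h1 : Tendsto (fun k : ℕ => (k:ℝ) * Δ - C₂) atTop atTop :=
      tendsto_atTop_add_const_right atTop (-C₂) hΔtend
    have h2 : Tendsto (fun t : ℝ => -(η * t) / 2) atTop atBot := by
      have hneg : -(η / 2) < 0 := by linarith [half_pos hη]
      have := (tendsto_const_mul_atBot_of_neg hneg).mpr (tendsto_id (α := ℝ) (x := atTop))
      refine this.congr (fun t => by simp only [id_eq]; ring)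
    exact h2.comp h1
  have hcdtend : Tendsto cd atTop (nhds 0) := by
    have hform : cd = fun k : ℕ => ((Fintype.card A : ℝ) * (2 * Real.exp (-1) / η))
        * Real.exp (-(η * ((k:ℝ) * Δ - C₂)) / 2) := by
      funext k; rw [hcd]; ring
    rw [hform]
    simpa using hexp.const_mul ((Fintype.card A : ℝ) * (2 * Real.exp (-1) / η))
  have hδtend : Tendsto (fun k => 2 * cd k) atTop (nhds 0) := by
    simpa using hcdtend.const_mul 2
  have hwlim : Tendsto w atTop (nhds 0) := by
    refine aux_contract γ hγ0 hγ1 w (fun k => 2 * cd k) hwnn hδtend ?_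
    filter_upwards [hevent] with k hk
    exact hrecw k hk
  intro x
  constructor
  · rw [← tendsto_sub_nhds_zero_iff]
    refine squeeze_zero_norm (a := w) (fun k => ?_) hwlim
    rw [Real.norm_eq_abs]
    exact hwb k x
  · intro a ha
    have hcomp : ∀ k : ℕ, Ψ k x a ≤ (N0 + γ * E + E) - (k:ℝ) * Δ := by
      intro k
      rw [hstar k x a]
      have h1 := abs_le.mp (hN0 x a)
      have h3 := abs_le.mp (havg (ev k) E (hEbound k) x a)
      have h9 := abs_le.mp (hEbound k x)
      have h5 : (k:ℝ) * Δ ≤ (k:ℝ) * (Vstar x - Qstar x a) :=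
        mul_le_mul_of_nonneg_left (hΔle x a ha) (Nat.cast_nonneg k)
      have h5' : (k:ℝ) * (Qstar x a - Vstar x) = -((k:ℝ) * (Vstar x - Qstar x a)) := by ring
      have h6 : γ * (∑ x', P x a x' * ev k x') ≤ γ * E :=
        mul_le_mul_of_nonneg_left h3.2 hγ0
      rw [h5']
      linarith [h1.2, h9.1]
    refine tendsto_atBot_mono hcomp ?_
    have hneg : Tendsto (fun k : ℕ => -((k:ℝ) * Δ)) atTop atBot :=
      tendsto_neg_atTop_atBot.comp hΔtend
    simpa [sub_eq_add_neg] using tendsto_atBot_add_const_left atTop (N0 + γ * E + E) hneg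

end auxlemmas

/-- Theorem 2 of the paper: under a unique deterministic optimal policy, the DPP action
preferences converge to `V*(x)` at the optimal action and to `−∞` elsewhere. -/
theorem dpp_action_preference_limit
    {X A : Type*} [Fintype X] [Fintype A] [Nonempty X] [Nonempty A]
    (P : X → A → X → ℝ) (hP0 : ∀ x a x', 0 ≤ P x a x') (hP1 : ∀ x a, ∑ x', P x a x' = 1)
    (r : X → A → ℝ) (Rmax : ℝ) (hR : 0 < Rmax) (hr : ∀ x a, |r x a| ≤ Rmax)
    (γ : ℝ) (hγ0 : 0 ≤ γ) (hγ1 : γ < 1)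
    (Vmax : ℝ) (hV : Vmax = Rmax / (1 - γ))
    (η : ℝ) (hη : 0 < η)
    (Ψ : ℕ → X → A → ℝ) (hΨ0 : supNorm (Ψ 0) ≤ Vmax)
    (pol : ℕ → X → A → ℝ) (hpol : ∀ k, pol k = softmaxPol η (Ψ k))
    (hΨ : ∀ k x a, Ψ (k + 1) x a =
      Ψ k x a + bellman P r γ (pol k) (Ψ k) x a - polApply (pol k) (Ψ k) x)
    (Qstar : X → A → ℝ) (hQstar : bellmanOpt P r γ Qstar = Qstar)
    (astar : X → A)
    (hastar : ∀ x a, a ≠ astar x → Qstar x a < Qstar x (astar x)) :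
    ∀ x : X,
      Filter.Tendsto (fun k => Ψ k x (astar x)) Filter.atTop
        (nhds (Finset.univ.sup' Finset.univ_nonempty (Qstar x))) ∧
      ∀ a : A, a ≠ astar x →
        Filter.Tendsto (fun k => Ψ k x a) Filter.atTop Filter.atBot := by
  classical
  have hQ : ∀ x a, Qstar x a
      = r x a + γ * ∑ x', P x a x' * (univ.sup' univ_nonempty (Qstar x')) := by
    intro x a
    conv_lhs => rw [← hQstar]
    simp only [bellmanOpt]
  have hQle : ∀ x a, Qstar x a ≤ univ.sup' univ_nonempty (Qstar x) :=
    fun x a => Finset.le_sup' _ (mem_univ a)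
  have hQa : ∀ x, Qstar x (astar x) = univ.sup' univ_nonempty (Qstar x) := by
    intro x
    refine le_antisymm (hQle x _) (Finset.sup'_le _ _ fun a _ => ?_)
    by_cases ha : a = astar x
    · rw [ha]
    · exact (hastar x a ha).le
  obtain ⟨Δ, hΔpos, hΔle⟩ : ∃ Δ : ℝ, 0 < Δ ∧ ∀ x a, a ≠ astar x →
      Δ ≤ (univ.sup' univ_nonempty (Qstar x)) - Qstar x a := by
    by_cases hs : (Finset.univ.filter (fun p : X × A => p.2 ≠ astar p.1)).Nonempty
    · refine ⟨(Finset.univ.filter (fun p : X × A => p.2 ≠ astar p.1)).inf' hs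
        (fun p => univ.sup' univ_nonempty (Qstar p.1) - Qstar p.1 p.2), ?_, ?_⟩
      · rw [Finset.lt_inf'_iff]
        intro p hp
        have hp' : p.2 ≠ astar p.1 := (Finset.mem_filter.mp hp).2
        have h1 := hastar p.1 p.2 hp'
        have h2 := hQa p.1
        linarith
      · intro x a ha
        exact Finset.inf'_le _ (Finset.mem_filter.mpr ⟨Finset.mem_univ (x, a), ha⟩)
    · exact ⟨1, one_pos, fun x a ha =>
        absurd (Finset.mem_filter.mpr ⟨mem_univ (x, a), ha⟩) (fun h => hs ⟨_, h⟩)⟩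
  refine dpp_core P hP0 hP1 γ hγ0 hγ1 η hη Ψ Qstar
    (fun x => univ.sup' univ_nonempty (Qstar x)) astar
    (fun k x => polApply (pol k) (Ψ k) x)
    (fun k x => (∑ j ∈ Finset.range k, polApply (pol j) (Ψ j) x)
      - (k:ℝ) * univ.sup' univ_nonempty (Qstar x))
    ?_ ?_ ?_ ?_ hQa hQle Δ hΔpos hΔle
    (supNorm (Ψ 0)) ?_
    (univ.sup' univ_nonempty (fun x => |univ.sup' univ_nonempty (Qstar x)|)) ?_
  · intro k x
    simp only [polApply, hpol, softmaxPol]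
  · intro x
    beta_reduce
    simp
  · intro k x
    beta_reduce
    rw [Finset.sum_range_succ]
    push_cast
    ring
  · intro k x a
    beta_reduce
    rw [hΨ k x a]
    have hb : bellman P r γ (pol k) (Ψ k) x a
        = r x a + γ * ∑ x', P x a x' * polApply (pol k) (Ψ k) x' := by
      simp only [bellman, polApply, Finset.mul_sum, mul_assoc]
    rw [hb, hQ x a]
    have hsplit : ∑ x', P x a x' * (polApply (pol k) (Ψ k) x'
          - univ.sup' univ_nonempty (Qstar x'))
        = (∑ x', P x a x' * polApply (pol k) (Ψ k) x')
          - ∑ x', P x a x' * univ.sup' univ_nonempty (Qstar x') := by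
      rw [← Finset.sum_sub_distrib]
      exact Finset.sum_congr rfl fun _ _ => by ring
    rw [hsplit]
    ring
  · intro x a
    exact Finset.le_sup' (fun p : X × A => |Ψ 0 p.1 p.2|) (mem_univ (x, a))
  · intro x
    exact Finset.le_sup' (fun x => |univ.sup' univ_nonempty (Qstar x)|) (mem_univ x)
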